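/- Let (X, 𝒜, μ) be a complete finite measure space with a partial order ≤, and let p denote the metric projection onto L²_≤(X, μ, ℝ). Then p(f + c) = p(f) + c for every f ∈ L²(X, μ, ℝ) and every constant c ∈ ℝ. -/

import Mathlib

open MeasureTheory
open scoped ENNReal

/-- The closed convex cone of elements of `L²(X, μ, ℝ)` having a representative that is
isotonic off a `μ`-null set. -/
def isoL2 {X : Type*} [MeasurableSpace X] [PartialOrder X]
    (μ : Measure X) : Set (Lp ℝ 2 μ) :=
  {f | ∃ f₀ : X → ℝ, (⇑f) =ᵐ[μ] f₀ ∧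
    ∃ N : Set X, μ N = 0 ∧ ∀ x ∉ N, ∀ y ∉ N, x ≤ y → f₀ x ≤ f₀ y}

lemma isoL2_add_const {X : Type*} [MeasurableSpace X] [PartialOrder X]
    (μ : Measure X) (g C : Lp ℝ 2 μ) (c : ℝ) (hC : (⇑C) =ᵐ[μ] fun _ => c)
    (hg : g ∈ isoL2 μ) : g + C ∈ isoL2 μ := by
  obtain ⟨g₀, hg₀, N, hN, hmono⟩ := hg
  refine ⟨fun x => g₀ x + c, ?_, N, hN, fun x hx y hy hxy => ?_⟩
  · filter_upwards [Lp.coeFn_add g C, hg₀, hC] with x h1 h2 h3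
    simp only [h1, Pi.add_apply, h2, h3]
  · exact add_le_add_left (hmono x hx y hy hxy) c

/-- On a complete finite measure space with a partial order, the metric projection `p`
onto `L²_≤(X, μ, ℝ)` satisfies `p(f + c) = p(f) + c` for every constant `c ∈ ℝ`:
if `fstar` is the metric projection of `f` and `C` is the constant function `c` in `L²`,
then `fstar + C` is the metric projection of `f + C`. -/
theorem stmt_9 {X : Type*} [MeasurableSpace X] [PartialOrder X]
    (μ : Measure X) [μ.IsComplete] [IsFiniteMeasure μ]
    (f fstar C : Lp ℝ 2 μ) (c : ℝ) (hC : (⇑C) =ᵐ[μ] fun _ => c)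
    (hproj : fstar ∈ isoL2 μ ∧
      ‖f - fstar‖ = ⨅ g : isoL2 μ, ‖f - (g : Lp ℝ 2 μ)‖) :
    fstar + C ∈ isoL2 μ ∧
      ‖(f + C) - (fstar + C)‖ = ⨅ g : isoL2 μ, ‖(f + C) - (g : Lp ℝ 2 μ)‖ := by
  obtain ⟨hmem, hdist⟩ := hproj
  have hCneg : (⇑(-C)) =ᵐ[μ] fun _ => -c := by
    filter_upwards [Lp.coeFn_neg C, hC] with x h1 h2
    simp only [h1, Pi.neg_apply, h2]
  have hmem' : fstar + C ∈ isoL2 μ := isoL2_add_const μ fstar C c hC hmem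
  refine ⟨hmem', ?_⟩
  have hne : Nonempty (isoL2 μ) := ⟨⟨fstar, hmem⟩⟩
  have hbdd : ∀ (h : Lp ℝ 2 μ), BddBelow (Set.range fun g : isoL2 μ => ‖h - (g : Lp ℝ 2 μ)‖) :=
    fun h => ⟨0, by rintro x ⟨g, rfl⟩; exact norm_nonneg _⟩
  have key : (f + C) - (fstar + C) = f - fstar := by abel
  rw [key, hdist]
  apply le_antisymm
  · refine le_ciInf fun g => ?_
    have h2 : ‖(f + C) - (g : Lp ℝ 2 μ)‖ = ‖f - ((g : Lp ℝ 2 μ) + (-C))‖ := by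
      congr 1; abel
    rw [h2]
    exact ciInf_le (hbdd _) (⟨(g : Lp ℝ 2 μ) + (-C), isoL2_add_const μ g (-C) (-c) hCneg g.2⟩ : isoL2 μ)
  · refine le_ciInf fun g => ?_
    have h2 : ‖f - (g : Lp ℝ 2 μ)‖ = ‖(f + C) - ((g : Lp ℝ 2 μ) + C)‖ := by
      congr 1; abel
    rw [h2]
    exact ciInf_le (hbdd _) (⟨(g : Lp ℝ 2 μ) + C, isoL2_add_const μ g C c hC g.2⟩ : isoL2 μ)
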